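/- For every integer k ≥ 2 and every w > 0, the joint law μ_k of two consecutive states (X_k, X_{k+1}) of the Kendall random walk with α = 1 and unit step δ_1 satisfies μ_k({(u,v) ∈ ℝ² : v − u < w}) = 1 − k(k−1) ∫_1^∞ (u−1)^{k−2} u^{−k} (u+w)^{−2} du; in particular the distribution of the increment X_{k+1} − X_k depends on k, so the increments are not stationary. -/

import Mathlib

open MeasureTheory Set

/-- The Pareto probability measure `π_2`, with density `2 x⁻³ 1_{(1,∞)}(x)`. -/
noncomputable def pareto2 : Measure ℝ :=
  volume.withDensity (fun x => ENNReal.ofReal (if 1 < x then 2 / x ^ 3 else 0))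

/-- The distribution `λ_k = δ_1^{△_1 k}` of the state `X_k` of the Kendall random walk
(`α = 1`, unit step `δ_1`), with density `k (k-1) x⁻³ (1 - 1/x)^(k-2) 1_{(1,∞)}(x)`
for `k ≥ 2`. -/
noncomputable def lamK (k : ℕ) : Measure ℝ :=
  volume.withDensity (fun x => ENNReal.ofReal
    (if 1 < x then (k : ℝ) * ((k : ℝ) - 1) / x ^ 3 * (1 - 1 / x) ^ (k - 2) else 0))

/-- The one-step transition kernel `K(u, ·) = u⁻¹ (T_u π_2) + (1 - u⁻¹) δ_u` of the
Kendall random walk with `α = 1` and unit step `δ_1`. -/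
noncomputable def kendallStep (u : ℝ) : Measure ℝ :=
  ENNReal.ofReal u⁻¹ • Measure.map (fun x => u * x) pareto2
    + ENNReal.ofReal (1 - u⁻¹) • Measure.dirac u

/-- The joint law `μ_k = λ_k ⊗ K` of two consecutive states `(X_k, X_{k+1})`:
`μ_k(C) = ∫ K(u, {v : (u,v) ∈ C}) λ_k(du)`. -/
noncomputable def jointLaw (k : ℕ) : Measure (ℝ × ℝ) :=
  (lamK k).bind (fun u => (kendallStep u).map (fun v => (u, v)))


section Helpers
open Filter

/-- derivative building block -/
lemma hasDerivAt_g (k : ℕ) (hk : 2 ≤ k) {u : ℝ} (hu : 1 < u) :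
    HasDerivAt (fun u : ℝ => (k:ℝ) * (1 - 1/u) ^ (k-1) - ((k:ℝ)-1) * (1 - 1/u) ^ k)
      ((k:ℝ) * ((k:ℝ)-1) / u ^ 3 * (1 - 1/u) ^ (k-2)) u := by
  have hu0 : u ≠ 0 := by positivity
  have h1 : HasDerivAt (fun u : ℝ => 1 - 1/u) (1 / u^2) u := by
    simpa using ((hasDerivAt_inv hu0).const_sub 1)
  have h2 := (h1.pow (k-1)).const_mul (k:ℝ)
  have h3 := (h1.pow k).const_mul ((k:ℝ)-1)
  have h4 := h2.sub h3
  refine h4.congr_deriv (Eq.symm ?_)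
  have e1 : k - 1 - 1 = k - 2 := by omega
  have e2 : (↑(k-1) : ℝ) = (k:ℝ) - 1 := by
    have : (1:ℕ) ≤ k := by omega
    push_cast [Nat.cast_sub this]; ring
  have e3 : k - 1 = (k-2) + 1 := by omega
  rw [e1, e2]
  rw [show (fun u:ℝ => 1-1/u) u ^ (k-1) = (1-1/u)^(k-2) * (1-1/u) by
    rw [e3, pow_succ]]
  have hinv : (1:ℝ) - 1/u = (u-1)/u := by field_simp
  field_simp
  ring

lemma rho_nonneg (k : ℕ) {u : ℝ} (hu : 1 < u) :
    0 ≤ (k:ℝ) * ((k:ℝ)-1) / u ^ 3 * (1 - 1/u) ^ (k-2) := by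
  have h1 : (0:ℝ) ≤ 1 - 1/u := by
    rw [sub_nonneg]; rw [div_le_one (by linarith)]; linarith
  have hk0 : (0:ℝ) ≤ (k:ℝ) * ((k:ℝ)-1) := by
    rcases Nat.eq_zero_or_pos k with h | h
    · simp [h]
    · have : (1:ℝ) ≤ (k:ℝ) := by exact_mod_cast h
      nlinarith
  positivity

lemma tendsto_g (k : ℕ) :
    Tendsto (fun u : ℝ => (k:ℝ) * (1 - 1/u) ^ (k-1) - ((k:ℝ)-1) * (1 - 1/u) ^ k)
      atTop (nhds 1) := by
  have h : Tendsto (fun u : ℝ => 1 - 1/u) atTop (nhds 1) := by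
    have := (tendsto_const_nhds (x := (1:ℝ)) (f := (atTop : Filter ℝ))).sub
      tendsto_inv_atTop_zero
    simpa using this
  have h2 := ((h.pow (k-1)).const_mul (k:ℝ)).sub ((h.pow k).const_mul ((k:ℝ)-1))
  simpa using h2


lemma contWithin_g (k : ℕ) :
    ContinuousWithinAt (fun u : ℝ => (k:ℝ) * (1 - 1/u) ^ (k-1) - ((k:ℝ)-1) * (1 - 1/u) ^ k)
      (Ici 1) 1 := by
  have hb : ContinuousAt (fun u : ℝ => 1 - 1/u) 1 :=
    continuousAt_const.sub (continuousAt_const.div continuousAt_id one_ne_zero)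
  exact (((continuousAt_const.mul (hb.pow (k-1)))).sub
    (continuousAt_const.mul (hb.pow k))).continuousWithinAt

lemma integrableOn_rho (k : ℕ) (hk : 2 ≤ k) :
    IntegrableOn (fun u : ℝ => (k:ℝ) * ((k:ℝ)-1) / u ^ 3 * (1 - 1/u) ^ (k-2)) (Ioi 1) := by
  exact integrableOn_Ioi_deriv_of_nonneg (contWithin_g k)
    (fun x hx => hasDerivAt_g k hk hx) (fun x hx => rho_nonneg k hx) (tendsto_g k)

lemma integral_rho (k : ℕ) (hk : 2 ≤ k) :
    ∫ u in Ioi (1:ℝ), (k:ℝ) * ((k:ℝ)-1) / u ^ 3 * (1 - 1/u) ^ (k-2) = 1 := by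
  rw [integral_Ioi_of_hasDerivAt_of_tendsto (contWithin_g k)
    (fun x hx => hasDerivAt_g k hk hx) (integrableOn_rho k hk) (tendsto_g k)]
  have h1 : (1:ℝ) - 1/1 = 0 := by norm_num
  rw [h1]
  rw [zero_pow (by omega : k - 1 ≠ 0), zero_pow (by omega : k ≠ 0)]
  ring

instance : SFinite pareto2 := by
  unfold pareto2; infer_instance

lemma pareto2_Iio {c : ℝ} (hc : 1 < c) :
    pareto2 (Iio c) = ENNReal.ofReal (1 - 1 / c ^ 2) := by
  rw [pareto2, withDensity_apply _ measurableSet_Iio]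
  have hind : (fun x : ℝ => ENNReal.ofReal (if 1 < x then 2 / x ^ 3 else 0))
      = (Ioi (1:ℝ)).indicator (fun x => ENNReal.ofReal (2 / x ^ 3)) := by
    ext x
    by_cases h : 1 < x <;> simp [indicator, h, mem_Ioi]
  rw [hind, lintegral_indicator measurableSet_Ioi,
    Measure.restrict_restrict measurableSet_Ioi]
  have hset : Ioi (1:ℝ) ∩ Iio c = Ioo 1 c := rfl
  rw [hset]
  rw [← ofReal_integral_eq_lintegral_ofReal]
  · congr 1
    rw [← MeasureTheory.integral_Ioc_eq_integral_Ioo,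
      ← intervalIntegral.integral_of_le hc.le]
    have : ∫ x in (1:ℝ)..c, 2 / x ^ 3 = (-c⁻¹^2) - (-(1:ℝ)⁻¹^2) := by
      apply intervalIntegral.integral_eq_sub_of_hasDerivAt
      · intro x hx
        rw [uIcc_of_le hc.le] at hx
        have hx0 : x ≠ 0 := by have := hx.1; intro h; rw [h] at this; linarith
        have h1 : HasDerivAt (fun x : ℝ => -(x⁻¹^2)) (2 / x ^ 3) x := by
          have := ((hasDerivAt_inv hx0).pow 2).neg
          refine this.congr_deriv (Eq.symm ?_)
          field_simp
          rw [show (2:ℕ) - 1 = 1 from rfl, pow_one, Nat.cast_ofNat, mul_one_div, mul_comm x, mul_div_assoc, div_self hx0, mul_one]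
        simpa using h1
      · apply ContinuousOn.intervalIntegrable
        apply ContinuousOn.div continuousOn_const (continuousOn_pow 3)
        intro x hx
        rw [uIcc_of_le hc.le] at hx
        have : (1:ℝ) ≤ x := hx.1
        positivity
    rw [this]
    field_simp
    ring
  · have hcont : ContinuousOn (fun x:ℝ => 2 / x^3) (Icc 1 c) := by
      apply ContinuousOn.div continuousOn_const (continuousOn_pow 3)
      intro x hx
      have : (1:ℝ) ≤ x := hx.1
      positivity
    exact hcont.integrableOn_Icc.mono_set Ioo_subset_Icc_self
  · refine (ae_restrict_iff' measurableSet_Ioo).2 (Filter.Eventually.of_forall ?_)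
    intro x hx
    have : (1:ℝ) < x := hx.1
    positivity

lemma kendallStep_Iio {u w : ℝ} (hu : 1 < u) (hw : 0 < w) :
    kendallStep u (Iio (u + w)) = ENNReal.ofReal (1 - u / (u + w) ^ 2) := by
  have hu0 : 0 < u := by linarith
  rw [kendallStep]
  rw [Measure.add_apply, Measure.smul_apply, Measure.smul_apply]
  rw [Measure.map_apply (by fun_prop) measurableSet_Iio]
  have hpre : (fun x => u * x) ⁻¹' Iio (u + w) = Iio ((u + w) / u) := by
    ext x
    simp only [mem_preimage, mem_Iio]
    rw [lt_div_iff₀ hu0, mul_comm]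
  rw [hpre]
  have hc : 1 < (u + w) / u := by
    rw [lt_div_iff₀ hu0]; linarith
  rw [pareto2_Iio hc]
  rw [Measure.dirac_apply' _ measurableSet_Iio]
  have hmem : u ∈ Iio (u + w) := by simp [mem_Iio]; linarith
  rw [indicator_of_mem hmem]
  simp only [smul_eq_mul, Pi.one_apply, mul_one]
  rw [← ENNReal.ofReal_mul (by positivity)]
  rw [← ENNReal.ofReal_add]
  · congr 1
    have huw : u + w ≠ 0 := by positivity
    field_simp
    ring
  · apply mul_nonneg (by positivity)
    have h1 : 1 / ((u+w)/u) ^ 2 ≤ 1 := by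
      rw [div_le_one (by positivity)]
      nlinarith [sq_nonneg ((u+w)/u)]
    linarith
  · have : u⁻¹ ≤ 1 := by
      rw [inv_le_one_iff₀]; right; linarith
    linarith

lemma measurable_jointKernel :
    Measurable (fun u : ℝ => (kendallStep u).map (fun v => (u, v))) := by
  apply Measure.measurable_of_measurable_coe
  intro s hs
  have hpre : ∀ u : ℝ, MeasurableSet ((fun v => (u, v)) ⁻¹' s) :=
    fun u => (measurable_prodMk_left hs)
  have heq : ∀ u : ℝ, ((kendallStep u).map (fun v => (u, v))) s
      = ENNReal.ofReal u⁻¹ * (∫⁻ x, s.indicator (fun _ => (1:ENNReal)) (u, u * x) ∂pareto2)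
        + ENNReal.ofReal (1 - u⁻¹) * s.indicator (fun _ => (1:ENNReal)) (u, u) := by
    intro u
    rw [Measure.map_apply measurable_prodMk_left hs]
    rw [kendallStep, Measure.add_apply, Measure.smul_apply, Measure.smul_apply,
      smul_eq_mul, smul_eq_mul]
    congr 1
    · congr 1
      rw [Measure.map_apply (by fun_prop) (hpre u)]
      have ht : MeasurableSet ((fun x => u * x) ⁻¹' ((fun v => (u, v)) ⁻¹' s)) := by
        exact (by fun_prop : Measurable fun x : ℝ => u * x) (hpre u)
      rw [← lintegral_indicator_one ht]
      congr 1
    · congr 1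
      rw [Measure.dirac_apply' _ (hpre u)]
      rfl
  simp only [heq]
  apply Measurable.add
  · apply Measurable.mul (by fun_prop)
    apply Measurable.lintegral_prod_right'
      (f := fun p : ℝ × ℝ => s.indicator (fun _ => (1:ENNReal)) (p.1, p.1 * p.2))
    exact (measurable_const.indicator hs).comp (by fun_prop)
  · apply Measurable.mul (by fun_prop)
    exact (measurable_const.indicator hs).comp (by fun_prop)

lemma measurableSet_S (w : ℝ) : MeasurableSet {p : ℝ × ℝ | p.2 - p.1 < w} :=
  measurableSet_lt (by fun_prop) measurable_const

lemma core_eq (k : ℕ) (hk : 2 ≤ k) {w : ℝ} (hw : 0 < w) {x : ℝ} (hx : 1 < x) :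
    ((k:ℝ) * ((k:ℝ)-1) / x ^ 3 * (1 - 1/x) ^ (k-2)) * (x / (x + w) ^ 2)
      = (k:ℝ) * ((k:ℝ)-1) * ((x - 1) ^ (k-2) / (x ^ k * (x + w) ^ 2)) := by
  have hx0 : (0:ℝ) < x := by linarith
  have h1 : (1:ℝ) - 1/x = (x - 1)/x := by field_simp
  have hxk : x ^ k = x ^ (k-2) * x ^ 2 := by
    rw [← pow_add]
    congr 1
    omega
  rw [h1, div_pow, hxk]
  have hA0 : x ^ (k-2) ≠ 0 := by positivity
  have hxw : x + w ≠ 0 := by positivity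
  generalize hA : x ^ (k-2) = A at hA0 ⊢
  generalize (x-1) ^ (k-2) = B
  have hx' : x ≠ 0 := by positivity
  field_simp

lemma part1 (k : ℕ) (hk : 2 ≤ k) (w : ℝ) (hw : 0 < w) :
    jointLaw k {p : ℝ × ℝ | p.2 - p.1 < w}
      = ENNReal.ofReal (1 - (k : ℝ) * ((k : ℝ) - 1)
          * ∫ u in Set.Ioi (1:ℝ), (u - 1) ^ (k - 2) / (u ^ k * (u + w) ^ 2)) := by
  set S := {p : ℝ × ℝ | p.2 - p.1 < w} with hS
  set ρ : ℝ → ℝ := fun x => (k:ℝ) * ((k:ℝ)-1) / x ^ 3 * (1 - 1/x) ^ (k-2) with hρ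
  set h : ℝ → ℝ := fun x => ρ x * (x / (x + w) ^ 2) with hh
  -- basic pointwise facts on Ioi 1
  have hfrac : ∀ x : ℝ, 1 < x → 0 ≤ x / (x+w)^2 ∧ x / (x+w)^2 ≤ 1 := by
    intro x hx
    constructor
    · positivity
    · rw [div_le_one (by positivity)]
      nlinarith
  have h_nonneg : ∀ x ∈ Ioi (1:ℝ), 0 ≤ h x := fun x hx =>
    mul_nonneg (rho_nonneg k hx) (hfrac x hx).1
  have h_le : ∀ x ∈ Ioi (1:ℝ), h x ≤ ρ x := by
    intro x hx
    have := (hfrac x hx).2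
    have hρn := rho_nonneg k (hx : 1 < x)
    calc h x ≤ ρ x * 1 := by
          apply mul_le_mul_of_nonneg_left this hρn
      _ = ρ x := mul_one _
  have hmeas_ρ : Measurable ρ := by fun_prop
  have hmeas_h : Measurable h := by fun_prop
  have hint_h : IntegrableOn h (Ioi 1) := by
    apply (integrableOn_rho k hk).mono' hmeas_h.aestronglyMeasurable
    refine (ae_restrict_iff' measurableSet_Ioi).2 (Filter.Eventually.of_forall ?_)
    intro x hx
    rw [Real.norm_eq_abs, abs_of_nonneg (h_nonneg x hx)]
    exact h_le x hx
  -- step 1 : bind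
  rw [jointLaw, Measure.bind_apply (measurableSet_S w) measurable_jointKernel.aemeasurable]
  -- step 2 : withDensity
  have hmeasd : Measurable (fun x : ℝ => ENNReal.ofReal
      (if 1 < x then (k : ℝ) * ((k : ℝ) - 1) / x ^ 3 * (1 - 1 / x) ^ (k - 2) else 0)) := by
    apply ENNReal.measurable_ofReal.comp
    apply Measurable.ite measurableSet_Ioi (by fun_prop) measurable_const
  have hmeasG : Measurable (fun u : ℝ => ((kendallStep u).map (fun v => (u, v))) S) :=
    (Measure.measurable_coe (measurableSet_S w)).comp measurable_jointKernel
  rw [lamK, lintegral_withDensity_eq_lintegral_mul _ hmeasd hmeasG]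
  -- step 3 : indicator
  have hind : (fun x : ℝ => ENNReal.ofReal
        (if 1 < x then ρ x else 0) * ((kendallStep x).map (fun v => (x, v))) S)
      = (Ioi (1:ℝ)).indicator (fun x => ENNReal.ofReal (ρ x - h x)) := by
    ext x
    by_cases hx : 1 < x
    · rw [indicator_of_mem (mem_Ioi.mpr hx)]
      rw [if_pos hx]
      have hpre : (fun v => (x, v)) ⁻¹' S = Iio (x + w) := by
        ext v
        simp [hS, mem_Iio, sub_lt_iff_lt_add, add_comm]
      rw [Measure.map_apply measurable_prodMk_left (measurableSet_S w), hpre,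
        kendallStep_Iio hx hw, ← ENNReal.ofReal_mul (rho_nonneg k hx)]
      congr 1
      rw [hh]
      ring
    · rw [indicator_of_notMem (fun hmem => hx (mem_Ioi.mp hmem)), if_neg hx,
        ENNReal.ofReal_zero, zero_mul]
  simp only [Pi.mul_apply] at hind ⊢
  rw [hind, lintegral_indicator measurableSet_Ioi]
  -- step 4 : split the subtraction
  have hnn_ae : 0 ≤ᵐ[volume.restrict (Ioi (1:ℝ))] h :=
    (ae_restrict_iff' measurableSet_Ioi).2 (Filter.Eventually.of_forall h_nonneg)
  have hρnn_ae : 0 ≤ᵐ[volume.restrict (Ioi (1:ℝ))] ρ :=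
    (ae_restrict_iff' measurableSet_Ioi).2
      (Filter.Eventually.of_forall (fun x hx => rho_nonneg k hx))
  have hsub : ∀ x ∈ Ioi (1:ℝ), ENNReal.ofReal (ρ x - h x)
      = ENNReal.ofReal (ρ x) - ENNReal.ofReal (h x) :=
    fun x hx => ENNReal.ofReal_sub _ (h_nonneg x hx)
  rw [setLIntegral_congr_fun measurableSet_Ioi hsub]
  have hlinth : ∫⁻ x in Ioi (1:ℝ), ENNReal.ofReal (h x) = ENNReal.ofReal (∫ x in Ioi (1:ℝ), h x) :=
    (ofReal_integral_eq_lintegral_ofReal hint_h hnn_ae).symm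
  have hlintρ : ∫⁻ x in Ioi (1:ℝ), ENNReal.ofReal (ρ x) = 1 := by
    rw [(ofReal_integral_eq_lintegral_ofReal (integrableOn_rho k hk) hρnn_ae).symm,
      integral_rho k hk, ENNReal.ofReal_one]
  rw [lintegral_sub (f := fun x => ENNReal.ofReal (ρ x)) (g := fun x => ENNReal.ofReal (h x)) hmeas_h.ennreal_ofReal
    (by rw [hlinth]; exact ENNReal.ofReal_ne_top)
    ((ae_restrict_iff' measurableSet_Ioi).2 (Filter.Eventually.of_forall
      (fun x hx => ENNReal.ofReal_le_ofReal (h_le x hx))))]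
  rw [hlintρ, hlinth]
  -- step 5 : identify the integral
  have hIrw : ∫ x in Ioi (1:ℝ), h x
      = (k : ℝ) * ((k : ℝ) - 1) * ∫ u in Ioi (1:ℝ), (u - 1) ^ (k - 2) / (u ^ k * (u + w) ^ 2) := by
    rw [← MeasureTheory.integral_const_mul]
    apply setIntegral_congr_fun measurableSet_Ioi
    intro x hx
    exact core_eq k hk hw hx
  have hcnn : 0 ≤ ∫ x in Ioi (1:ℝ), h x :=
    setIntegral_nonneg measurableSet_Ioi h_nonneg
  rw [← ENNReal.ofReal_one, ← ENNReal.ofReal_sub _ hcnn, hIrw]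

lemma integrable_inv_sq_Ioi : IntegrableOn (fun u : ℝ => (u ^ 2)⁻¹) (Ioi 1) ∧
    ∫ u in Ioi (1:ℝ), (u ^ 2)⁻¹ = 1 := by
  have hcont : ContinuousWithinAt (fun u : ℝ => -u⁻¹) (Ici 1) 1 :=
    ((continuousAt_inv₀ one_ne_zero).neg).continuousWithinAt
  have hderiv : ∀ x ∈ Ioi (1:ℝ), HasDerivAt (fun u : ℝ => -u⁻¹) ((x ^ 2)⁻¹) x := by
    intro x hx
    have hx0 : x ≠ 0 := by have : (1:ℝ) < x := hx; positivity
    have := (hasDerivAt_inv hx0).neg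
    refine this.congr_deriv (Eq.symm ?_)
    field_simp
  have hpos : ∀ x ∈ Ioi (1:ℝ), 0 ≤ ((x:ℝ) ^ 2)⁻¹ := by
    intro x hx; positivity
  have htend : Filter.Tendsto (fun u : ℝ => -u⁻¹) Filter.atTop (nhds 0) := by
    have h0 : Filter.Tendsto (fun u : ℝ => u⁻¹) Filter.atTop (nhds 0) := tendsto_inv_atTop_zero
    simpa using h0.neg
  refine ⟨integrableOn_Ioi_deriv_of_nonneg hcont hderiv hpos htend, ?_⟩
  rw [integral_Ioi_of_hasDerivAt_of_tendsto hcont hderiv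
    (integrableOn_Ioi_deriv_of_nonneg hcont hderiv hpos htend) htend]
  norm_num

lemma f2_bound :
    ∫ u in Ioi (1:ℝ), (u - 1) ^ (2 - 2) / (u ^ 2 * (u + 150) ^ 2) ≤ 1/22500 := by
  have h1 : ∫ u in Ioi (1:ℝ), (u - 1) ^ (2-2) / (u ^ 2 * (u + 150) ^ 2)
      ≤ ∫ u in Ioi (1:ℝ), (1/22500) * (u ^ 2)⁻¹ := by
    apply integral_mono_of_nonneg
    · refine (ae_restrict_iff' measurableSet_Ioi).2 (Filter.Eventually.of_forall ?_)
      intro x hx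
      have h1x : (1:ℝ) < x := hx
      norm_num
      positivity
    · exact integrable_inv_sq_Ioi.1.const_mul _
    · refine (ae_restrict_iff' measurableSet_Ioi).2 (Filter.Eventually.of_forall ?_)
      intro x hx
      have hx1 : (1:ℝ) < x := hx
      simp only [pow_zero, one_div]
      rw [div_le_iff₀ (by positivity)]
      have h150 : (150:ℝ)^2 ≤ (x + 150)^2 := by nlinarith
      calc (1:ℝ) = (x^2 * (150:ℝ)^2) * (22500⁻¹ * (x^2)⁻¹) := by
            field_simp
            ring
        _ ≤ (x^2 * (x+150)^2) * (22500⁻¹ * (x^2)⁻¹) := by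
            apply mul_le_mul_of_nonneg_right _ (by positivity)
            apply mul_le_mul_of_nonneg_left h150 (by positivity)
        _ = 22500⁻¹ * (x ^ 2)⁻¹ * (x ^ 2 * (x + 150) ^ 2) := by ring
    
  calc _ ≤ ∫ u in Ioi (1:ℝ), (1/22500) * (u ^ 2)⁻¹ := h1
    _ = (1/22500) * ∫ u in Ioi (1:ℝ), (u ^ 2)⁻¹ := by rw [MeasureTheory.integral_const_mul]
    _ = 1/22500 := by rw [integrable_inv_sq_Ioi.2]; norm_num

lemma f3_int : IntegrableOn (fun u : ℝ => (u - 1) ^ (3 - 2) / (u ^ 3 * (u + 150) ^ 2)) (Ioi 1) := by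
  apply (integrable_inv_sq_Ioi.1.const_mul (1/22500)).mono'
    ((by fun_prop : Measurable fun u : ℝ => (u - 1) ^ (3 - 2) / (u ^ 3 * (u + 150) ^ 2)).aestronglyMeasurable)
  refine (ae_restrict_iff' measurableSet_Ioi).2 (Filter.Eventually.of_forall ?_)
  intro x hx
  have hx1 : (1:ℝ) < x := hx
  have hx0 : (0:ℝ) < x := by linarith
  rw [Real.norm_eq_abs,
    abs_of_nonneg (div_nonneg (pow_nonneg (by linarith) _) (by positivity))]
  norm_num
  rw [div_le_iff₀ (by positivity)]
  have key : (x - 1) * 22500 * x ^ 2 ≤ x ^ 3 * (x + 150) ^ 2 := by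
    nlinarith [pow_pos hx0 5, pow_pos hx0 4, pow_pos hx0 2]
  calc x - 1 = ((x-1) * 22500 * x^2) * (22500⁻¹ * (x^2)⁻¹) := by field_simp
    _ ≤ (x ^ 3 * (x + 150) ^ 2) * (22500⁻¹ * (x^2)⁻¹) := by
        apply mul_le_mul_of_nonneg_right key (by positivity)
    _ = 1/22500 * (x ^ 2)⁻¹ * (x ^ 3 * (x + 150) ^ 2) := by ring

lemma base_int : ∫ u in Ioc (1:ℝ) 10, (u - 1)/u^3 = 81/200 := by
  rw [← intervalIntegral.integral_of_le (by norm_num : (1:ℝ) ≤ 10)]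
  have : ∫ u in (1:ℝ)..10, (u-1)/u^3
      = (-(10:ℝ)⁻¹ + (2*10^2)⁻¹) - (-(1:ℝ)⁻¹ + (2*1^2)⁻¹) := by
    refine intervalIntegral.integral_eq_sub_of_hasDerivAt
      (f := fun x : ℝ => -x⁻¹ + (2*x^2)⁻¹) ?_ ?_
    · intro x hx
      rw [uIcc_of_le (by norm_num : (1:ℝ) ≤ 10)] at hx
      have hx0 : (0:ℝ) < x := by have := hx.1; linarith
      have h1 : HasDerivAt (fun x : ℝ => -x⁻¹ + (2*x^2)⁻¹) ((x^2)⁻¹ - (x^3)⁻¹) x := by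
        have ha := (hasDerivAt_inv (by positivity : x ≠ 0)).neg
        have hb := (((hasDerivAt_pow 2 x).const_mul (2:ℝ)).inv (by positivity)).const_add 0
        have hc := ha.add (((hasDerivAt_pow 2 x).const_mul (2:ℝ)).inv (by positivity))
        refine hc.congr_deriv (Eq.symm ?_)
        field_simp
        ring
      refine h1.congr_deriv (Eq.symm ?_)
      field_simp
    · apply ContinuousOn.intervalIntegrable
      apply ContinuousOn.div (by fun_prop) (by fun_prop)
      intro x hx
      rw [uIcc_of_le (by norm_num : (1:ℝ) ≤ 10)] at hx
      have := hx.1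
      positivity
  rw [this]
  norm_num

lemma f3_bound :
    81/5120000 ≤ ∫ u in Ioi (1:ℝ), (u - 1) ^ (3 - 2) / (u ^ 3 * (u + 150) ^ 2) := by
  have step1 : ∫ u in Ioc (1:ℝ) 10, (u - 1) ^ (3-2) / (u ^ 3 * (u + 150) ^ 2)
      ≤ ∫ u in Ioi (1:ℝ), (u - 1) ^ (3-2) / (u ^ 3 * (u + 150) ^ 2) := by
    apply setIntegral_mono_set f3_int
    · refine (ae_restrict_iff' measurableSet_Ioi).2 (Filter.Eventually.of_forall ?_)
      intro x hx
      have hx1 : (1:ℝ) < x := hx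
      have hx0 : (0:ℝ) < x := by linarith
      exact div_nonneg (pow_nonneg (by linarith) _) (by positivity)
    · exact HasSubset.Subset.eventuallyLE Ioc_subset_Ioi_self
  have step2 : ∫ u in Ioc (1:ℝ) 10, (1/25600) * ((u - 1)/u^3)
      ≤ ∫ u in Ioc (1:ℝ) 10, (u - 1) ^ (3-2) / (u ^ 3 * (u + 150) ^ 2) := by
    apply setIntegral_mono_on
    · apply (ContinuousOn.integrableOn_Icc ?_).mono_set Ioc_subset_Icc_self
      apply ContinuousOn.mul continuousOn_const
      apply ContinuousOn.div (by fun_prop) (by fun_prop)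
      intro x hx
      have := hx.1
      positivity
    · exact f3_int.mono_set Ioc_subset_Ioi_self
    · exact measurableSet_Ioc
    · intro x hx
      have hx1 : (1:ℝ) < x := hx.1
      have hx10 : x ≤ 10 := hx.2
      have hx0 : (0:ℝ) < x := by linarith
      norm_num
      rw [show (1:ℝ)/25600 * ((x-1)/x^3) = (x-1)/(25600*x^3) from by ring,
        div_le_div_iff₀ (by positivity) (by positivity)]
      have h160 : (x+150)^2 ≤ 25600 := by nlinarith
      have hfac : 0 ≤ (x-1) * x^3 * (25600 - (x+150)^2) :=
        mul_nonneg (mul_nonneg (by linarith) (by positivity)) (by linarith)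
      nlinarith [hfac]
  have step3 : (81:ℝ)/5120000 ≤ ∫ u in Ioc (1:ℝ) 10, (1/25600) * ((u - 1)/u^3) := by
    rw [MeasureTheory.integral_const_mul, base_int]
    norm_num
  linarith


end Helpers

/-- For every `k ≥ 2` and `w > 0`, the joint law `μ_k` of `(X_k, X_{k+1})` satisfies
`μ_k({v - u < w}) = 1 - k(k-1) ∫_1^∞ (u-1)^(k-2) u^(-k) (u+w)^(-2) du`; in particular the
distribution of the increment `X_{k+1} - X_k` depends on `k`, so the increments are not
stationary. -/
theorem jointLaw_increment_not_stationary :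
    (∀ k : ℕ, 2 ≤ k → ∀ w : ℝ, 0 < w →
      jointLaw k {p : ℝ × ℝ | p.2 - p.1 < w}
        = ENNReal.ofReal (1 - (k : ℝ) * ((k : ℝ) - 1)
            * ∫ u in Set.Ioi (1:ℝ), (u - 1) ^ (k - 2) / (u ^ k * (u + w) ^ 2)))
    ∧ ∃ k l : ℕ, 2 ≤ k ∧ 2 ≤ l ∧ ∃ w : ℝ, 0 < w ∧
        jointLaw k {p : ℝ × ℝ | p.2 - p.1 < w}
          ≠ jointLaw l {p : ℝ × ℝ | p.2 - p.1 < w} := by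
  constructor
  · exact fun k hk w hw => part1 k hk w hw
  · refine ⟨2, 3, le_refl 2, by norm_num, 150, by norm_num, ?_⟩
    rw [part1 2 (by norm_num) 150 (by norm_num), part1 3 (by norm_num) 150 (by norm_num)]
    have e2 : ((2:ℕ):ℝ) * (((2:ℕ):ℝ) - 1) = 2 := by norm_num
    have e3 : ((3:ℕ):ℝ) * (((3:ℕ):ℝ) - 1) = 6 := by norm_num
    rw [e2, e3]
    set J2 := ∫ u in Ioi (1:ℝ), (u - 1) ^ (2 - 2) / (u ^ 2 * (u + 150) ^ 2) with hJ2
    set J3 := ∫ u in Ioi (1:ℝ), (u - 1) ^ (3 - 2) / (u ^ 3 * (u + 150) ^ 2) with hJ3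
    have h2 : J2 ≤ 1/22500 := f2_bound
    have h3 : (81:ℝ)/5120000 ≤ J3 := f3_bound
    have hApos : (0:ℝ) < 1 - 2 * J2 := by nlinarith
    have hBA : 1 - 6 * J3 < 1 - 2 * J2 := by nlinarith
    apply ne_of_gt
    rw [ENNReal.ofReal_lt_ofReal_iff hApos]
    exact hBA
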